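/- Under the hypotheses that every colour class of an (s-1)-colouring of E(K_s) is a perfect matching and any 4-subset of vertices spanning two disjoint equally-coloured edges has its other two pairs of opposite edges also equally coloured, the operation + on colours defined by: c_i + c_j is the colour of y_i y_j, where x y_i has colour c_i and x y_j has colour c_j for any vertex x, is well-defined (independent of the choice of x). -/
import Mathlib


/-- given an `(s-1)`-edge-colouring of `K_s` where every colour class is a
perfect matching and opposite edges of a 4-set spanning two disjoint equally-coloured
edges are equally coloured, the addition on colours, `c_i + c_j :=` the colour of
`y_i y_j` where `x y_i` has colour `c_i` and `x y_j` has colour `c_j`, is well-defined,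
i.e. independent of the choice of the vertex `x`. -/
theorem stmt_13 {V : Type*} [Fintype V] [DecidableEq V] (s : ℕ) (hs : 2 ≤ s)
    (hcard : Fintype.card V = s) (c : Sym2 V → Fin (s - 1))
    (hpm : ∀ (i : Fin (s - 1)) (v : V), ∃! w : V, w ≠ v ∧ c s(v, w) = i)
    (h4 : ∀ w x y z : V, w ≠ x → w ≠ y → w ≠ z → x ≠ y → x ≠ z → y ≠ z →
      c s(w, x) = c s(y, z) → c s(w, y) = c s(x, z) ∧ c s(x, y) = c s(w, z))
    (i j : Fin (s - 1)) (hij : i ≠ j)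
    (x x' yi yj yi' yj' : V)
    (hyi : yi ≠ x) (hyj : yj ≠ x) (hyi' : yi' ≠ x') (hyj' : yj' ≠ x')
    (ci : c s(x, yi) = i) (cj : c s(x, yj) = j)
    (ci' : c s(x', yi') = i) (cj' : c s(x', yj') = j) :
    c s(yi, yj) = c s(yi', yj') := by
  -- uniqueness of matching partner
  have uniq : ∀ (k : Fin (s - 1)) (b a a' : V), a ≠ b → a' ≠ b →
      c s(b, a) = k → c s(b, a') = k → a = a' := by
    intro k b a a' ha ha' h1 h2
    obtain ⟨w, -, hw⟩ := hpm k b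
    rw [hw a ⟨ha, h1⟩, hw a' ⟨ha', h2⟩]
  have hyij : yi ≠ yj := by rintro rfl; exact hij (ci.symm.trans cj)
  have hyij' : yi' ≠ yj' := by rintro rfl; exact hij (ci'.symm.trans cj')
  have hxx'i : x ≠ x' → yi ≠ yi' := by
    intro hxx h
    rw [← h] at ci' hyi'
    exact hxx (uniq i yi x x' hyi.symm hyi'.symm
      (by rw [Sym2.eq_swap]; exact ci) (by rw [Sym2.eq_swap]; exact ci'))
  have hxx'j : x ≠ x' → yj ≠ yj' := by
    intro hxx h
    rw [← h] at cj' hyj'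
    exact hxx (uniq j yj x x' hyj.symm hyj'.symm
      (by rw [Sym2.eq_swap]; exact cj) (by rw [Sym2.eq_swap]; exact cj'))
  by_cases hxx : x = x'
  · subst hxx
    have e1 : yi = yi' := uniq i x yi yi' hyi hyi' ci ci'
    have e2 : yj = yj' := uniq j x yj yj' hyj hyj' cj cj'
    rw [e1, e2]
  · by_cases h1 : x' = yi
    · -- then yi' = x
      have hx'x : c s(x', x) = i := by rw [h1, Sym2.eq_swap]; exact ci
      have hyi'x : yi' = x := uniq i x' yi' x hyi' hxx ci' hx'x
      have hxyj' : x ≠ yj' := by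
        rintro rfl
        exact hij (hx'x.symm.trans cj')
      have key := (h4 x yj x' yj' hyj.symm hxx hxyj'
        (fun h => hyij (h.trans h1).symm) (hxx'j hxx) hyj'.symm (cj.trans cj'.symm)).2
      rw [h1] at key
      rw [hyi'x, Sym2.eq_swap]
      exact key
    · by_cases h2 : x' = yj
      · have hx'x : c s(x', x) = j := by rw [h2, Sym2.eq_swap]; exact cj
        have hyj'x : yj' = x := uniq j x' yj' x hyj' hxx cj' hx'x
        have hxyi' : x ≠ yi' := by
          rintro rfl
          exact hij (hx'x.symm.trans ci').symm
        have key := (h4 x yi x' yi' hyi.symm hxx hxyi'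
          (fun h => hyij (h.trans h2)) (hxx'i hxx) hyi'.symm
          (ci.trans ci'.symm)).2
        rw [h2] at key
        rw [hyj'x, Sym2.eq_swap (a := yi') (b := x)]
        exact key
      · -- generic case: x' ∉ {yi, yj}
        have hyi'x : yi' ≠ x := by
          intro h
          exact h1 (uniq i x x' yi (fun hh => hxx hh.symm) hyi
            (by rw [Sym2.eq_swap]; exact h ▸ ci') ci)
        have hyj'x : yj' ≠ x := by
          intro h
          exact h2 (uniq j x x' yj (fun hh => hxx hh.symm) hyj
            (by rw [Sym2.eq_swap]; exact h ▸ cj') cj)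
        have e1 := (h4 x yi x' yi' hyi.symm hxx hyi'x.symm
          (fun h => h1 h.symm) (hxx'i hxx) hyi'.symm (ci.trans ci'.symm)).1
        have e2 := (h4 x yj x' yj' hyj.symm hxx hyj'x.symm
          (fun h => h2 h.symm) (hxx'j hxx) hyj'.symm (cj.trans cj'.symm)).1
        have e3 : c s(yi, yi') = c s(yj, yj') := e1.symm.trans e2
        by_cases h3 : yi = yj'
        · subst h3
          rw [Sym2.eq_swap, ← e3, Sym2.eq_swap]
        · by_cases h4' : yj = yi'
          · subst h4'
            exact e3
          · exact (h4 yi yi' yj yj' (hxx'i hxx) hyij h3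
              (fun h => h4' h.symm) hyij' (hxx'j hxx) e3).1
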